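/- Under common support and conditionally independent censoring, if the censoring survival function G(t|x,a) = P(C > t | x, a) is strictly positive and the propensity score π_0 is correctly specified, then the IPCW-IPS estimator, which averages (π_e(a|x)/π_0(a|x)) · I{min(L,C) > t} / G(t|x,a), is an unbiased estimator of the policy value V(π_e,t) = E_{p(x)π_e(a|x)}[S(x,a,t)]. -/

import Mathlib

open MeasureTheory Finset

/-- Unbiasedness of the IPCW-IPS estimator when `G > 0` and the propensity
score is correctly specified. -/
theorem ipcw_ips_unbiased
    {X A Ω : Type*} [Fintype X] [Fintype A] [MeasurableSpace Ω]
    (p : X → ℝ) (hp : ∀ x, 0 ≤ p x) (hp1 : ∑ x, p x = 1)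
    (π0 πe : X → A → ℝ)
    (hπ0 : ∀ x a, 0 ≤ π0 x a) (hπ0s : ∀ x, ∑ a, π0 x a = 1)
    (hπe : ∀ x a, 0 ≤ πe x a) (hπes : ∀ x, ∑ a, πe x a = 1)
    (hsupp : ∀ x a, 0 < πe x a → 0 < π0 x a)
    (μ : X → A → Measure Ω) [∀ x a, IsProbabilityMeasure (μ x a)]
    (L C : Ω → ℝ) (hL : Measurable L) (hC : Measurable C)
    (hInd : ∀ x a (s u : ℝ), μ x a {ω | s < L ω ∧ u < C ω} =
      μ x a {ω | s < L ω} * μ x a {ω | u < C ω})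
    (t : ℝ)
    (hG : ∀ x a, 0 < (μ x a {ω | t < C ω}).toReal) :
    ∑ x, p x * ∑ a, π0 x a *
        ∫ ω, (πe x a / π0 x a) *
          (Set.indicator {ω : Ω | t < min (L ω) (C ω)} (fun _ => (1 : ℝ)) ω
            / (μ x a {ω | t < C ω}).toReal) ∂(μ x a)
      = ∑ x, p x * ∑ a, πe x a * (μ x a {ω | t < L ω}).toReal := by

  refine Finset.sum_congr rfl fun x _ => ?_
  congr 1
  refine Finset.sum_congr rfl fun a _ => ?_
  by_cases h0 : π0 x a = 0
  · have he : πe x a = 0 := by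
      by_contra h
      have := hsupp x a (lt_of_le_of_ne (hπe x a) (Ne.symm h))
      simp [h0] at this
    simp [h0, he]
  have hpos : 0 < π0 x a := lt_of_le_of_ne (hπ0 x a) (Ne.symm h0)
  have hmeas : MeasurableSet {ω : Ω | t < min (L ω) (C ω)} :=
    measurableSet_lt measurable_const (hL.min hC)
  have hfun : (fun ω => (πe x a / π0 x a) *
      (Set.indicator {ω : Ω | t < min (L ω) (C ω)} (fun _ => (1 : ℝ)) ω
        / (μ x a {ω | t < C ω}).toReal)) =
      Set.indicator {ω : Ω | t < min (L ω) (C ω)}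
        (fun _ => (πe x a / π0 x a) / (μ x a {ω | t < C ω}).toReal) := by
    funext ω
    by_cases hω : ω ∈ {ω : Ω | t < min (L ω) (C ω)}
    · rw [Set.indicator_of_mem hω, Set.indicator_of_mem hω]
      ring
    · rw [Set.indicator_of_notMem hω, Set.indicator_of_notMem hω]
      simp
  rw [hfun, integral_indicator_const _ hmeas]
  have hset : {ω : Ω | t < min (L ω) (C ω)} = {ω | t < L ω ∧ t < C ω} := by
    ext ω; simp [lt_min_iff]
  have hfin : ∀ s : Set Ω, μ x a s ≠ ⊤ := fun s => measure_ne_top _ s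
  have hprod : (μ x a {ω | t < min (L ω) (C ω)}).toReal
      = (μ x a {ω | t < L ω}).toReal * (μ x a {ω | t < C ω}).toReal := by
    rw [hset, hInd x a t t, ENNReal.toReal_mul]
  rw [measureReal_def, hprod]
  have hCne : (μ x a {ω | t < C ω}).toReal ≠ 0 := ne_of_gt (hG x a)
  field_simp
  rw [smul_eq_mul, mul_div_assoc', mul_div_assoc', div_eq_iff (mul_ne_zero h0 hCne)]
  ring
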